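/- Let A be a unital C*-algebra. For every x ∈ A with ‖x‖ < 1 - 2/n (where n ≥ 3 is an integer), x can be written as the average (1/n)(u_1 + ... + u_n) of n unitaries u_1,...,u_n in A. -/

import Mathlib

section KP

variable {A : Type*} [CStarAlgebra A]

open Complex in
/-- An invertible contraction in a unital C*-algebra is a mean of two unitaries. -/
lemma kp_polar [Nontrivial A] (a : A) (ha : IsUnit a) (hnorm : ‖a‖ ≤ 1) :
    ∃ v w : A, v ∈ unitary A ∧ w ∈ unitary A ∧ a + a = v + w := by
  set p := star a * a with hp_def
  have hpsa : IsSelfAdjoint p := IsSelfAdjoint.star_mul_self a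
  have hpu : IsUnit p := ha.star.mul ha
  have hspec_pos : ∀ t ∈ spectrum ℝ p, 0 < t := by
    intro t ht
    have h0 : 0 ≤ t := spectrum_star_mul_self_nonneg t ht
    rcases h0.lt_or_eq with h | h
    · exact h
    · exact absurd (h ▸ ht) (fun hc => (spectrum.zero_notMem_iff ℝ |>.mpr hpu) hc)
  have hspec_le : ∀ t ∈ spectrum ℝ p, t ≤ 1 := by
    intro t ht
    have h1 : ‖p‖ ≤ 1 := by
      calc ‖p‖ ≤ ‖star a‖ * ‖a‖ := norm_mul_le _ _
        _ = ‖a‖ * ‖a‖ := by rw [norm_star]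
        _ ≤ 1 * 1 := mul_le_mul hnorm hnorm (norm_nonneg a) zero_le_one
        _ = 1 := one_mul 1
    calc t ≤ ‖t‖ := Real.le_norm_self t
      _ ≤ ‖p‖ := spectrum.norm_le_norm_of_mem ht
      _ ≤ 1 := h1
  -- continuity facts
  have hc_sqrt : ContinuousOn Real.sqrt (spectrum ℝ p) :=
    Real.continuous_sqrt.continuousOn
  have hc_isqrt : ContinuousOn (fun t : ℝ => (Real.sqrt t)⁻¹) (spectrum ℝ p) := by
    apply ContinuousOn.inv₀ hc_sqrt
    intro t ht
    exact (Real.sqrt_pos.mpr (hspec_pos t ht)).ne'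
  have hc_d : ContinuousOn (fun t : ℝ => Real.sqrt (1 - t)) (spectrum ℝ p) :=
    (Real.continuous_sqrt.comp (continuous_const.sub continuous_id)).continuousOn
  set q := cfc (fun t : ℝ => (Real.sqrt t)⁻¹) p with hq_def
  set m := cfc (fun t : ℝ => Real.sqrt t) p with hm_def
  set d := cfc (fun t : ℝ => Real.sqrt (1 - t)) p with hd_def
  have hq_sa : IsSelfAdjoint q := cfc_predicate _ p
  have hm_sa : IsSelfAdjoint m := cfc_predicate _ p
  have hd_sa : IsSelfAdjoint d := cfc_predicate _ p
  set u := a * q with hu_def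
  -- q * p * q = 1
  have hqpq : q * p * q = 1 := by
    conv_lhs => rw [← cfc_id ℝ p hpsa]
    rw [← cfc_mul _ _ p hc_isqrt (continuousOn_id), ← cfc_mul (fun x => (Real.sqrt x)⁻¹ * id x) _ p
      ((hc_isqrt.mul continuousOn_id)) hc_isqrt]
    have : (spectrum ℝ p).EqOn (fun t => (Real.sqrt t)⁻¹ * id t * (Real.sqrt t)⁻¹)
        (fun _ => (1 : ℝ)) := by
      intro t ht
      have h0 := hspec_pos t ht
      have hs : Real.sqrt t * Real.sqrt t = t := Real.mul_self_sqrt h0.le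
      have hns : Real.sqrt t ≠ 0 := (Real.sqrt_pos.mpr h0).ne'
      field_simp
      rw [id, sq, hs]
    rw [cfc_congr this, cfc_const _ _ hpsa, map_one]
  -- q * q * p = 1  (all cfc's of p commute)
  have hqq_p : (q * q) * p = 1 := by
    conv_lhs => rw [← cfc_id ℝ p hpsa]
    rw [← cfc_mul _ _ p hc_isqrt hc_isqrt, ← cfc_mul (fun x => (Real.sqrt x)⁻¹ * (Real.sqrt x)⁻¹) _ p (hc_isqrt.mul hc_isqrt)
      (continuousOn_id)]
    have : (spectrum ℝ p).EqOn (fun t => (Real.sqrt t)⁻¹ * (Real.sqrt t)⁻¹ * id t)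
        (fun _ => (1 : ℝ)) := by
      intro t ht
      have h0 := hspec_pos t ht
      have hs : Real.sqrt t * Real.sqrt t = t := Real.mul_self_sqrt h0.le
      have hns : Real.sqrt t ≠ 0 := (Real.sqrt_pos.mpr h0).ne'
      field_simp
      rw [id, sq, hs]
    rw [cfc_congr this, cfc_const _ _ hpsa, map_one]
  -- u is unitary
  have hu_star_mul : star u * u = 1 := by
    have : star u * u = q * p * q := by
      rw [hu_def, star_mul, hq_sa.star_eq, hp_def]
      simp only [mul_assoc]
    rw [this, hqpq]
  have hu_mul_star : u * star u = 1 := by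
    rw [hu_def, star_mul, hq_sa.star_eq]
    -- a * q * (q * star a) = a * (q * q) * star a
    have key : (q * q) * star a = (ha.unit⁻¹ : Aˣ) := by
      have h1 : ((q * q) * star a) * a = 1 := by
        rw [mul_assoc, ← hp_def, hqq_p]
      calc (q * q) * star a = ((q * q) * star a) * (a * (ha.unit⁻¹ : Aˣ)) := by
            rw [IsUnit.mul_val_inv ha, mul_one]
        _ = (((q * q) * star a) * a) * (ha.unit⁻¹ : Aˣ) := by simp only [mul_assoc]
        _ = (ha.unit⁻¹ : Aˣ) := by rw [h1, one_mul]
    calc a * q * (q * star a) = a * ((q * q) * star a) := by simp only [mul_assoc]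
      _ = a * (ha.unit⁻¹ : Aˣ) := by rw [key]
      _ = 1 := IsUnit.mul_val_inv ha
  have hu_mem : u ∈ unitary A := Unitary.mem_iff.mpr ⟨hu_star_mul, hu_mul_star⟩
  -- u * m = a
  have hum : u * m = a := by
    rw [hu_def, mul_assoc, hq_def, hm_def, ← cfc_mul _ _ p hc_isqrt hc_sqrt]
    have : (spectrum ℝ p).EqOn (fun t => (Real.sqrt t)⁻¹ * Real.sqrt t)
        (fun _ => (1 : ℝ)) := by
      intro t ht
      exact inv_mul_cancel₀ (Real.sqrt_pos.mpr (hspec_pos t ht)).ne'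
    rw [cfc_congr this, cfc_const _ _ hpsa, map_one, mul_one]
  -- m ^ 2 + d ^ 2 = 1
  have hmd : m * m + d * d = 1 := by
    rw [hm_def, hd_def, ← cfc_mul _ _ p hc_sqrt hc_sqrt, ← cfc_mul _ _ p hc_d hc_d,
      ← cfc_add p (fun x => Real.sqrt x * Real.sqrt x) (fun x => Real.sqrt (1 - x) * Real.sqrt (1 - x)) (hc_sqrt.mul hc_sqrt) (hc_d.mul hc_d)]
    have : (spectrum ℝ p).EqOn
        (fun t => Real.sqrt t * Real.sqrt t + Real.sqrt (1 - t) * Real.sqrt (1 - t))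
        (fun _ => (1 : ℝ)) := by
      intro t ht
      have h0 := (hspec_pos t ht).le
      have h1 : (0:ℝ) ≤ 1 - t := by linarith [hspec_le t ht]
      simp only [Real.mul_self_sqrt h0, Real.mul_self_sqrt h1]
      ring_nf
    rw [cfc_congr this, cfc_const _ _ hpsa, map_one]
  have hcomm : m * d = d * m := (cfc_commute_cfc _ _ p).eq
  -- the unitary c
  set c := m + Complex.I • d with hc_def
  have hstar_c : star c = m - Complex.I • d := by
    rw [hc_def, star_add, hm_sa.star_eq, star_smul, hd_sa.star_eq, Complex.star_def,
      Complex.conj_I, neg_smul, ← sub_eq_add_neg]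
  have hee : (Complex.I • d) * (Complex.I • d) = -(d * d) := by
    rw [smul_mul_assoc, mul_smul_comm, smul_smul, Complex.I_mul_I, neg_one_smul]
  have hkey : ∀ e : A, m * e = e * m → e * e = -(d * d) → (m + e) * (m - e) = 1 := by
    intro e hme hee'
    have h1 : (m + e) * (m - e) = m * m - m * e + e * m - e * e := by noncomm_ring
    rw [h1, hme, hee', sub_neg_eq_add]
    rw [sub_add_cancel]
    exact hmd
  have hme : m * (Complex.I • d) = (Complex.I • d) * m := by
    rw [mul_smul_comm, smul_mul_assoc, hcomm]
  have hccstar : c * star c = 1 := by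
    rw [hstar_c, hc_def]
    exact hkey _ hme hee
  have hstarc_c : star c * c = 1 := by
    rw [hstar_c, hc_def]
    have h2 : m - Complex.I • d = m + -(Complex.I • d) := by rw [sub_eq_add_neg]
    have h3 : m + Complex.I • d = m - -(Complex.I • d) := by rw [sub_neg_eq_add]
    rw [h2, h3]
    refine hkey _ ?_ ?_
    · rw [mul_neg, neg_mul, hme]
    · rw [neg_mul_neg, hee]
  have hc_mem : c ∈ unitary A := Unitary.mem_iff.mpr ⟨hstarc_c, hccstar⟩
  have hstarc_mem : star c ∈ unitary A := Unitary.star_mem hc_mem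
  refine ⟨u * c, u * star c, mul_mem hu_mem hc_mem, mul_mem hu_mem hstarc_mem, ?_⟩
  have hcc : c + star c = m + m := by rw [hstar_c, hc_def]; abel
  calc a + a = u * m + u * m := by rw [hum]
    _ = u * (c + star c) := by rw [hcc, mul_add]
    _ = u * c + u * star c := by rw [mul_add]

/-- Key lemma: unitary plus small perturbation is a sum of two unitaries. -/
lemma kp_sum_two [Nontrivial A] (u y : A) (hu : u ∈ unitary A) (hy : ‖y‖ < 1) :
    ∃ v w : A, v ∈ unitary A ∧ w ∈ unitary A ∧ u + y = v + w := by
  set a := (2⁻¹ : ℝ) • (u + y) with ha_def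
  have haa : a + a = u + y := by
    rw [ha_def, ← add_smul]
    norm_num
  have hnorm : ‖a‖ ≤ 1 := by
    rw [ha_def, norm_smul]
    have h1 : ‖u + y‖ ≤ 2 := by
      calc ‖u + y‖ ≤ ‖u‖ + ‖y‖ := norm_add_le _ _
        _ ≤ 1 + 1 := by
            rw [CStarRing.norm_of_mem_unitary hu]
            linarith [hy.le]
        _ = 2 := by norm_num
    have : ‖(2⁻¹ : ℝ)‖ = 2⁻¹ := by norm_num
    rw [this]
    linarith
  have hunit : IsUnit a := by
    have h1 : IsUnit (u + y) := by
      have hfac : u + y = u * (1 + star u * y) := by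
        rw [mul_add, mul_one, ← mul_assoc, Unitary.mul_star_self_of_mem hu, one_mul]
      rw [hfac]
      refine (Unitary.toUnits ⟨u, hu⟩).isUnit.mul ?_
      have : ‖-(star u * y)‖ < 1 := by
        rw [norm_neg]
        calc ‖star u * y‖ ≤ ‖star u‖ * ‖y‖ := norm_mul_le _ _
          _ = ‖y‖ := by rw [norm_star, CStarRing.norm_of_mem_unitary hu, one_mul]
          _ < 1 := hy
      have h3 := isUnit_one_sub_of_norm_lt_one this
      rwa [sub_neg_eq_add] at h3
    have h2 : IsUnit (algebraMap ℝ A 2⁻¹) :=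
      (isUnit_iff_ne_zero.mpr (by norm_num : (2⁻¹:ℝ) ≠ 0)).map (algebraMap ℝ A)
    rw [ha_def, Algebra.smul_def]
    exact h2.mul h1
  obtain ⟨v, w, hv, hw, hvw⟩ := kp_polar a hunit hnorm
  exact ⟨v, w, hv, hw, by rw [← haa, hvw]⟩

/-- Sums of `m + 3` unitaries. -/
lemma kp_sum_aux [Nontrivial A] (m : ℕ) :
    ∀ a : A, ‖a‖ < (m : ℝ) + 1 →
      ∃ u : Fin (m + 3) → unitary A, a = ∑ i, (u i : A) := by
  induction m with
  | zero =>
    intro a ha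
    norm_num at ha
    obtain ⟨v, w, hv, hw, hvw⟩ := kp_sum_two (-1 : A) a
      (Unitary.star_mem_iff.mp (by simp [Unitary.mem_iff])) ha
    refine ⟨![1, ⟨v, hv⟩, ⟨w, hw⟩], ?_⟩
    have : ∑ i, ((![1, ⟨v, hv⟩, ⟨w, hw⟩] : Fin 3 → unitary A) i : A) = 1 + (v + w) := by
      rw [Fin.sum_univ_three]
      simp [add_assoc]
    rw [this, ← hvw]
    abel
  | succ k ih =>
    intro a ha
    have hk2 : (0:ℝ) < (k:ℝ) + 2 := by positivity
    set b := (((k : ℝ) + 1) / ((k : ℝ) + 2)) • a with hb_def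
    set y := (((k : ℝ) + 2))⁻¹ • a with hy_def
    have hby : b + y = a := by
      rw [hb_def, hy_def, ← add_smul]
      have : ((k : ℝ) + 1) / ((k : ℝ) + 2) + ((k : ℝ) + 2)⁻¹ = 1 := by
        field_simp
        ring
      rw [this, one_smul]
    have hbnorm : ‖b‖ < (k : ℝ) + 1 := by
      rw [hb_def, norm_smul]
      have h1 : ‖((k : ℝ) + 1) / ((k : ℝ) + 2)‖ = ((k : ℝ) + 1) / ((k : ℝ) + 2) := by
        rw [Real.norm_eq_abs, abs_of_pos (by positivity)]
      rw [h1]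
      have h2 : ‖a‖ < (k : ℝ) + 2 := by
        push_cast at ha ⊢
        linarith
      calc ((k : ℝ) + 1) / ((k : ℝ) + 2) * ‖a‖
          < ((k : ℝ) + 1) / ((k : ℝ) + 2) * ((k : ℝ) + 2) := by
            apply mul_lt_mul_of_pos_left h2 (by positivity)
        _ = (k : ℝ) + 1 := by field_simp
    have hynorm : ‖y‖ < 1 := by
      rw [hy_def, norm_smul]
      have h2 : ‖a‖ < (k : ℝ) + 2 := by
        push_cast at ha ⊢
        linarith
      have : ‖(((k : ℝ) + 2))⁻¹‖ = ((k : ℝ) + 2)⁻¹ := by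
        rw [Real.norm_eq_abs, abs_of_pos (by positivity)]
      rw [this]
      rw [inv_mul_lt_iff₀ hk2, mul_one]
      exact h2
    obtain ⟨u, hu⟩ := ih b hbnorm
    obtain ⟨v, w, hv, hw, hvw⟩ := kp_sum_two (u 0 : A) y (u 0).2 hynorm
    refine ⟨Fin.cons ⟨v, hv⟩ (Fin.cons ⟨w, hw⟩ (fun i => u i.succ)), ?_⟩
    rw [Fin.sum_univ_succ]
    rw [Fin.sum_univ_succ]
    simp only [Fin.cons_zero, Fin.cons_succ]
    have hsum : (b : A) = (u 0 : A) + ∑ i : Fin (k + 2), (u i.succ : A) := by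
      rw [hu, Fin.sum_univ_succ]
    calc a = b + y := hby.symm
      _ = (u 0 : A) + y + ∑ i : Fin (k + 2), (u i.succ : A) := by
          rw [hsum]; abel
      _ = v + w + ∑ i : Fin (k + 2), (u i.succ : A) := by rw [hvw]
      _ = (v : A) + ((w : A) + ∑ i : Fin (k + 2), (u i.succ : A)) := by abel

end KP

/-- Kadison–Pedersen: in a unital C*-algebra, any element of norm `< 1 - 2/n`
(`n ≥ 3`) is the average of `n` unitaries. -/
theorem stmt2 {A : Type*} [NormedRing A] [StarRing A] [CStarRing A]
    [NormedAlgebra ℂ A] [CompleteSpace A] [StarModule ℂ A]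
    (n : ℕ) (hn : 3 ≤ n) (x : A) (hx : ‖x‖ < 1 - 2 / (n : ℝ)) :
    ∃ u : Fin n → unitary A, x = (n : ℂ)⁻¹ • ∑ i, (u i : A) := by
  letI : CStarAlgebra A := ⟨⟩
  rcases subsingleton_or_nontrivial A with hs | hnt
  · exact ⟨fun _ => 1, Subsingleton.elim _ _⟩
  obtain ⟨m, rfl⟩ : ∃ m, n = m + 3 := ⟨n - 3, by omega⟩
  have hnpos : (0:ℝ) < ((m : ℝ) + 3) := by positivity
  set a := ((m : ℝ) + 3) • x with ha_def
  have hanorm : ‖a‖ < (m : ℝ) + 1 := by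
    rw [ha_def, norm_smul, Real.norm_eq_abs, abs_of_pos hnpos]
    have hcast : ((m + 3 : ℕ) : ℝ) = (m : ℝ) + 3 := by push_cast; ring
    rw [hcast] at hx
    calc ((m : ℝ) + 3) * ‖x‖ < ((m : ℝ) + 3) * (1 - 2 / ((m : ℝ) + 3)) :=
          mul_lt_mul_of_pos_left hx hnpos
      _ = (m : ℝ) + 1 := by field_simp; ring
  obtain ⟨u, hu⟩ := kp_sum_aux m a hanorm
  refine ⟨u, ?_⟩
  rw [← hu, ha_def]
  have h1 : ((m : ℝ) + 3) • x = ((m + 3 : ℕ) : ℂ) • x := by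
    rw [show ((m : ℝ) + 3) = ((m + 3 : ℕ) : ℝ) by push_cast; ring]
    rw [Nat.cast_smul_eq_nsmul, Nat.cast_smul_eq_nsmul]
  have h2 : ((m + 3 : ℕ) : ℂ) ≠ 0 := Nat.cast_ne_zero.mpr (by omega)
  rw [h1, smul_smul, inv_mul_cancel₀ h2, one_smul]
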